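/- For pure octonions a, b, x, the standard derivation satisfies D_{a,b}(x) = 3⟨a,x⟩b - 3⟨b,x⟩a + (1/2) x*(a*b). -/
import Mathlib


/-- An octonion algebra over `k`: an 8-dimensional unital (not necessarily associative)
`k`-algebra with a nondegenerate multiplicative quadratic form `N`. -/
structure OctonionAlgebra (k : Type) [Field k] (A : Type) [AddCommGroup A] [Module k A] where
  mul : A → A → A
  e : A
  N : A → k
  add_mul' : ∀ a b c : A, mul (a + b) c = mul a c + mul b c
  mul_add' : ∀ a b c : A, mul a (b + c) = mul a b + mul a c
  smul_mul' : ∀ (t : k) (a b : A), mul (t • a) b = t • mul a b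
  mul_smul' : ∀ (t : k) (a b : A), mul a (t • b) = t • mul a b
  one_mul' : ∀ a : A, mul e a = a
  mul_one' : ∀ a : A, mul a e = a
  dim_eq : Module.finrank k A = 8
  N_smul : ∀ (t : k) (a : A), N (t • a) = t ^ 2 * N a
  polar_add_left : ∀ a b c : A,
    N (a + b + c) - N (a + b) - N c = (N (a + c) - N a - N c) + (N (b + c) - N b - N c)
  polar_smul_left : ∀ (t : k) (a b : A),
    N (t • a + b) - N (t • a) - N b = t * (N (a + b) - N a - N b)
  nondeg : ∀ a : A, (∀ b : A, N (a + b) - N a - N b = 0) → a = 0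
  N_mul : ∀ a b : A, N (mul a b) = N a * N b

namespace OctonionAlgebra

variable {k : Type} [Field k] {A : Type} [AddCommGroup A] [Module k A]

/-- The bilinear form associated to the norm: `⟨x,y⟩ = N(x+y) - N(x) - N(y)`. -/
def inner (O : OctonionAlgebra k A) (x y : A) : k := O.N (x + y) - O.N x - O.N y

/-- The standard involution `x̄ = ⟨x,e⟩e - x`. -/
def conj (O : OctonionAlgebra k A) (x : A) : A := O.inner x O.e • O.e - x

/-- The Malcev product `a*b = ab - ba`. -/
def malcev (O : OctonionAlgebra k A) (a b : A) : A := O.mul a b - O.mul b a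

/-- The associator `{a,x,b} = (ax)b - a(xb)`. -/
def assoc (O : OctonionAlgebra k A) (a x b : A) : A :=
  O.mul (O.mul a x) b - O.mul a (O.mul x b)

/-- The standard derivation `D_{a,b} = [L_a,L_b] + [L_a,R_b] + [R_a,R_b]`, as a function. -/
def D (O : OctonionAlgebra k A) (a b x : A) : A :=
  O.mul a (O.mul b x) - O.mul b (O.mul a x)
  + O.mul a (O.mul x b) - O.mul (O.mul a x) b
  + O.mul (O.mul x b) a - O.mul (O.mul x a) b

variable (O : OctonionAlgebra k A)

theorem inner_comm (x y : A) : O.inner x y = O.inner y x := by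
  unfold inner; rw [add_comm]; ring

theorem inner_add_left (x y z : A) : O.inner (x + y) z = O.inner x z + O.inner y z :=
  O.polar_add_left x y z

theorem inner_smul_left (t : k) (x y : A) : O.inner (t • x) y = t * O.inner x y :=
  O.polar_smul_left t x y

theorem inner_add_right (x y z : A) : O.inner x (y + z) = O.inner x y + O.inner x z := by
  rw [O.inner_comm x (y + z), O.inner_add_left, O.inner_comm y x, O.inner_comm z x]

theorem inner_neg_left (x y : A) : O.inner (-x) y = -O.inner x y := by
  rw [← neg_one_smul k x, O.inner_smul_left]; ring

theorem inner_sub_left (x y z : A) : O.inner (x - y) z = O.inner x z - O.inner y z := by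
  rw [sub_eq_add_neg, O.inner_add_left, O.inner_neg_left]; ring

theorem nondeg_inner (w : A) (h : ∀ z : A, O.inner w z = 0) : w = 0 := O.nondeg w h

theorem mul_neg' (a b : A) : O.mul a (-b) = -O.mul a b := by
  rw [← neg_one_smul k b, O.mul_smul', neg_one_smul]

theorem neg_mul' (a b : A) : O.mul (-a) b = -O.mul a b := by
  rw [← neg_one_smul k a, O.smul_mul', neg_one_smul]

theorem mul_sub' (a b c : A) : O.mul a (b - c) = O.mul a b - O.mul a c := by
  rw [sub_eq_add_neg, O.mul_add', O.mul_neg', ← sub_eq_add_neg]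

theorem sub_mul' (a b c : A) : O.mul (a - b) c = O.mul a c - O.mul b c := by
  rw [sub_eq_add_neg, O.add_mul', O.neg_mul', ← sub_eq_add_neg]

theorem I1r (u w y : A) : O.inner (O.mul u y) (O.mul w y) = O.inner u w * O.N y := by
  have h := O.N_mul (u + w) y
  rw [O.add_mul'] at h
  simp only [inner]
  linear_combination h - O.N_mul u y - O.N_mul w y

theorem I1l (u v z : A) : O.inner (O.mul u v) (O.mul u z) = O.N u * O.inner v z := by
  have h := O.N_mul u (v + z)
  rw [O.mul_add'] at h
  simp only [inner]
  linear_combination h - O.N_mul u v - O.N_mul u z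

theorem I2 (u v w z : A) :
    O.inner (O.mul u v) (O.mul w z) + O.inner (O.mul u z) (O.mul w v)
      = O.inner u w * O.inner v z := by
  have h := O.I1r u w (v + z)
  rw [O.mul_add', O.mul_add', O.inner_add_left, O.inner_add_right, O.inner_add_right] at h
  have hd : O.inner v z = O.N (v + z) - O.N v - O.N z := rfl
  linear_combination h - O.I1r u w v - O.I1r u w z - O.inner u w * hd

theorem A1 (u v z : A) :
    O.inner (O.mul u v) z = O.inner u O.e * O.inner v z - O.inner (O.mul u z) v := by
  have h := O.I2 u v O.e z
  rw [O.one_mul', O.one_mul'] at h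
  linear_combination h

theorem A2 (u v z : A) :
    O.inner (O.mul u v) z = O.inner u z * O.inner v O.e - O.inner u (O.mul z v) := by
  have h := O.I2 u v z O.e
  rw [O.mul_one', O.mul_one'] at h
  linear_combination h

theorem KirmseL (u v : A) :
    O.mul u (O.mul u v) = O.inner u O.e • O.mul u v - O.N u • v := by
  rw [← sub_eq_zero]
  refine O.nondeg_inner _ fun z => ?_
  rw [O.inner_sub_left, O.inner_sub_left, O.inner_smul_left, O.inner_smul_left]
  have h1 := O.A1 u (O.mul u v) z
  have h2 := O.I1l u z v
  have hc := O.inner_comm z v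
  linear_combination h1 - h2 - O.N u * hc

theorem KirmseR (u v : A) :
    O.mul (O.mul v u) u = O.inner u O.e • O.mul v u - O.N u • v := by
  rw [← sub_eq_zero]
  refine O.nondeg_inner _ fun z => ?_
  rw [O.inner_sub_left, O.inner_sub_left, O.inner_smul_left, O.inner_smul_left]
  have h1 := O.A2 (O.mul v u) u z
  have h2 := O.I1r v z u
  linear_combination h1 - h2

theorem LL (u w v : A) :
    O.mul u (O.mul w v) + O.mul w (O.mul u v)
      = O.inner u O.e • O.mul w v + O.inner w O.e • O.mul u v - O.inner u w • v := by
  have h := O.KirmseL (u + w) v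
  rw [O.add_mul'] at h
  rw [O.add_mul'] at h
  rw [O.mul_add', O.mul_add'] at h
  have hN : O.N (u + w) = O.N u + O.N w + O.inner u w := by
    simp only [inner]; ring
  rw [hN, O.inner_add_left] at h
  linear_combination (norm := module) h - O.KirmseL u v - O.KirmseL w v

theorem RR (u w v : A) :
    O.mul (O.mul v u) w + O.mul (O.mul v w) u
      = O.inner u O.e • O.mul v w + O.inner w O.e • O.mul v u - O.inner u w • v := by
  have h := O.KirmseR (u + w) v
  rw [O.mul_add'] at h
  rw [O.mul_add'] at h
  rw [O.add_mul', O.add_mul'] at h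
  have hN : O.N (u + w) = O.N u + O.N w + O.inner u w := by
    simp only [inner]; ring
  rw [hN, O.inner_add_left] at h
  linear_combination (norm := module) h - O.KirmseR u v - O.KirmseR w v

theorem ACg (u w : A) :
    O.mul u w + O.mul w u
      = O.inner u O.e • w + O.inner w O.e • u - O.inner u w • O.e := by
  have h := O.LL u w O.e
  rw [O.mul_one', O.mul_one'] at h
  exact h

theorem LmulAC (p u w : A) :
    O.mul p (O.mul u w) + O.mul p (O.mul w u)
      = O.inner u O.e • O.mul p w + O.inner w O.e • O.mul p u - O.inner u w • p := by
  rw [← O.mul_add', O.ACg, O.mul_sub', O.mul_add', O.mul_smul', O.mul_smul', O.mul_smul',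
    O.mul_one']

theorem RmulAC (p u w : A) :
    O.mul (O.mul u w) p + O.mul (O.mul w u) p
      = O.inner u O.e • O.mul w p + O.inner w O.e • O.mul u p - O.inner u w • p := by
  rw [← O.add_mul', O.ACg, O.sub_mul', O.add_mul', O.smul_mul', O.smul_mul', O.smul_mul',
    O.one_mul']

theorem trace_mul (u v : A) :
    O.inner (O.mul u v) O.e = O.inner u O.e * O.inner v O.e - O.inner u v := by
  have h := O.A1 u v O.e
  rw [O.mul_one'] at h
  exact h


end OctonionAlgebra

/-- For pure octonions `a, b, x`, the standard derivation satisfies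
`D_{a,b}(x) = 3⟨a,x⟩b - 3⟨b,x⟩a + (1/2) x*(a*b)`. -/
theorem stmt4 {k A : Type} [Field k] [AddCommGroup A] [Module k A]
    (h2 : (2 : k) ≠ 0) (h3 : (3 : k) ≠ 0) (O : OctonionAlgebra k A) :
    ∀ a b x : A, O.inner a O.e = 0 → O.inner b O.e = 0 → O.inner x O.e = 0 →
      O.D a b x
        = (3 * O.inner a x) • b - (3 * O.inner b x) • a
          + (2 : k)⁻¹ • O.malcev x (O.malcev a b) := by
  intro a b x ha hb hx
  -- scalar facts
  have hIabe : O.inner (O.mul a b) O.e = -O.inner a b := by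
    have h := O.trace_mul a b
    rw [ha, hb] at h
    simpa using h
  have hIxae : O.inner (O.mul x a) O.e = -O.inner x a := by
    have h := O.trace_mul x a
    rw [hx, ha] at h
    simpa using h
  have hba : O.mul b a = -O.mul a b - O.inner a b • O.e := by
    linear_combination (norm := module) O.ACg a b + ha • b + hb • a
  have hIba : O.inner (O.mul b a) x = -O.inner (O.mul a b) x := by
    rw [hba, O.inner_sub_left, O.inner_neg_left, O.inner_smul_left,
      O.inner_comm O.e x, hx]
    ring
  have hIxab : O.inner (O.mul x a) b = O.inner (O.mul a b) x := by
    have h := O.A2 x a b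
    rw [ha, O.inner_comm x (O.mul b a), hIba] at h
    simpa using h
  -- element identities (pure versions)
  have h1 : O.mul b (O.mul a x) = -O.mul a (O.mul b x) - O.inner a b • x := by
    linear_combination (norm := module) O.LL a b x + ha • O.mul b x + hb • O.mul a x
  have hh2 : O.mul a (O.mul x b) = -O.mul a (O.mul b x) - O.inner x b • a := by
    linear_combination (norm := module) O.LmulAC a x b + hx • O.mul a b + hb • O.mul a x
  have hh3 : O.mul x (O.mul a b)
      = O.mul a (O.mul b x) + O.inner x b • a - O.inner a x • b := by
    linear_combination (norm := module) O.LL a x b - hh2 + ha • O.mul x b + hx • O.mul a b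
  have h5 : O.mul (O.mul a b) x
      = -O.mul x (O.mul a b) - O.inner a b • x - O.inner (O.mul a b) x • O.e := by
    linear_combination (norm := module) O.ACg (O.mul a b) x + hIabe • x + hx • O.mul a b
  have h4 : O.mul (O.mul a x) b = -O.mul (O.mul a b) x - O.inner x b • a := by
    linear_combination (norm := module) O.RR x b a + hx • O.mul a b + hb • O.mul a x
  have h9 : O.mul x (O.mul b a) = -O.mul x (O.mul a b) - O.inner a b • x := by
    linear_combination (norm := module) O.LmulAC x a b + ha • O.mul x b + hb • O.mul x a
  have h7 : O.mul b (O.mul x a) = -O.mul x (O.mul b a) - O.inner b x • a := by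
    linear_combination (norm := module) O.LL b x a + hb • O.mul x a + hx • O.mul b a
  have h6 : O.mul (O.mul x a) b
      = -O.mul b (O.mul x a) - O.inner a x • b - O.inner (O.mul a b) x • O.e := by
    linear_combination (norm := module) O.ACg (O.mul x a) b + hIxae • b
      - (O.inner_comm x a) • b + hb • O.mul x a - hIxab • O.e
  have hT5 : O.mul (O.mul x b) a = -O.mul (O.mul x a) b - O.inner a b • x := by
    linear_combination (norm := module) O.RR b a x - (O.inner_comm b a) • x
      + hb • O.mul x a + ha • O.mul x b
  have h10 : O.mul (O.mul b a) x = -O.mul (O.mul a b) x - O.inner a b • x := by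
    linear_combination (norm := module) O.RmulAC x a b + ha • O.mul b x + hb • O.mul a x
  have hM : O.malcev x (O.malcev a b)
      = (2 : k) • ((2 : k) • O.mul x (O.mul a b) + O.inner a b • x
          + O.inner (O.mul a b) x • O.e) := by
    simp only [OctonionAlgebra.malcev]
    rw [O.mul_sub', O.sub_mul']
    linear_combination (norm := module) h10 - h9 - (2 : k) • h5
  rw [hM, smul_smul, inv_mul_cancel₀ h2, one_smul]
  simp only [OctonionAlgebra.D]
  linear_combination (norm := module) -h1 + hh2 - hh3 - h4 + h5 - (2 : k) • h6
    + (2 : k) • h7 - (2 : k) • h9 + hT5 - (O.inner_comm x b) • a
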